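/- Let A and B be matrices with Moore–Penrose pseudo-inverses A⁺ and B⁺. Then ‖B⁺ − A⁺‖ ≤ 3·max(‖A⁺‖², ‖B⁺‖²)·‖B − A‖, where ‖·‖ is the spectral (operator) norm. -/

import Mathlib

open scoped Matrix Matrix.Norms.L2Operator

/-- Perturbation bound for Moore–Penrose pseudo-inverses (Stewart):
`‖B⁺ - A⁺‖ ≤ 3 max(‖A⁺‖², ‖B⁺‖²) ‖B - A‖` in spectral norm, where `A⁺, B⁺` are
characterized by the four Penrose conditions. -/
theorem pseudoinverse_perturbation {m n : ℕ}
    (A B : Matrix (Fin m) (Fin n) ℝ) (Ap Bp : Matrix (Fin n) (Fin m) ℝ)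
    (hA1 : A * Ap * A = A) (hA2 : Ap * A * Ap = Ap)
    (hA3 : (A * Ap)ᵀ = A * Ap) (hA4 : (Ap * A)ᵀ = Ap * A)
    (hB1 : B * Bp * B = B) (hB2 : Bp * B * Bp = Bp)
    (hB3 : (B * Bp)ᵀ = B * Bp) (hB4 : (Bp * B)ᵀ = Bp * B) :
    ‖Bp - Ap‖ ≤ 3 * max (‖Ap‖ ^ 2) (‖Bp‖ ^ 2) * ‖B - A‖ := by
  -- basic algebraic facts
  have e1 : Bp * Bpᵀ * Bᵀ = Bp := by
    rw [Matrix.mul_assoc, ← Matrix.transpose_mul, hB3, ← Matrix.mul_assoc, hB2]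
  have e2 : Aᵀ * (A * Ap) = Aᵀ := by
    rw [← hA3, ← Matrix.transpose_mul, hA1]
  have e3 : Bp * B * Bᵀ = Bᵀ := by
    rw [← hB4, ← Matrix.transpose_mul, ← Matrix.mul_assoc, hB1]
  have e4 : Aᵀ * (Apᵀ * Ap) = Ap := by
    rw [← Matrix.mul_assoc, ← Matrix.transpose_mul, hA4, hA2]
  have z2 : Aᵀ * (1 - A * Ap) = 0 := by
    rw [Matrix.mul_sub, Matrix.mul_one, e2, sub_self]
  have z3 : (1 - Bp * B) * Bᵀ = 0 := by
    rw [Matrix.sub_mul, Matrix.one_mul, e3, sub_self]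
  -- the Wedin decomposition
  have h1 : Bp * Bpᵀ * (B - A)ᵀ * (1 - A * Ap) = Bp - Bp * (A * Ap) := by
    rw [Matrix.transpose_sub, Matrix.mul_sub (Bp * Bpᵀ) Bᵀ Aᵀ, Matrix.sub_mul,
      Matrix.mul_assoc (Bp * Bpᵀ) Aᵀ (1 - A * Ap), z2, Matrix.mul_zero, sub_zero, e1,
      Matrix.mul_sub Bp 1 (A * Ap), Matrix.mul_one]
  have h2 : (1 - Bp * B) * (B - A)ᵀ * (Apᵀ * Ap) = Bp * (B * Ap) - Ap := by
    rw [Matrix.transpose_sub, Matrix.mul_sub (1 - Bp * B) Bᵀ Aᵀ, Matrix.sub_mul, z3,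
      Matrix.zero_mul, Matrix.mul_assoc (1 - Bp * B) Aᵀ (Apᵀ * Ap), e4,
      Matrix.sub_mul 1 (Bp * B) Ap, Matrix.one_mul, Matrix.mul_assoc Bp B Ap,
      zero_sub, neg_sub]
  have key : Bp - Ap = -(Bp * (B - A) * Ap) + Bp * Bpᵀ * (B - A)ᵀ * (1 - A * Ap)
      + (1 - Bp * B) * (B - A)ᵀ * (Apᵀ * Ap) := by
    rw [h1, h2, Matrix.mul_sub Bp B A, Matrix.sub_mul, Matrix.mul_assoc Bp B Ap,
      Matrix.mul_assoc Bp A Ap]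
    abel
  -- transpose preserves norm
  have hct : ∀ {p q : ℕ} (M : Matrix (Fin p) (Fin q) ℝ), ‖Mᵀ‖ = ‖M‖ := by
    intro p q M
    rw [← Matrix.conjTranspose_eq_transpose_of_trivial, Matrix.l2_opNorm_conjTranspose]
  -- orthogonal projections have norm ≤ 1
  have proj_le : ∀ {p : ℕ} (P : Matrix (Fin p) (Fin p) ℝ), Pᵀ = P → P * P = P → ‖P‖ ≤ 1 := by
    intro p P hs hi
    have h : ‖P‖ * ‖P‖ = ‖P‖ := by
      rw [← Matrix.l2_opNorm_conjTranspose_mul_self P,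
        Matrix.conjTranspose_eq_transpose_of_trivial, hs, hi]
    nlinarith [norm_nonneg P]
  have idemA : (A * Ap) * (A * Ap) = A * Ap := by rw [← Matrix.mul_assoc, hA1]
  have idemB : (Bp * B) * (Bp * B) = Bp * B := by rw [← Matrix.mul_assoc, hB2]
  have hP1 : ‖(1 : Matrix (Fin m) (Fin m) ℝ) - A * Ap‖ ≤ 1 := by
    apply proj_le
    · rw [Matrix.transpose_sub, Matrix.transpose_one, hA3]
    · rw [sub_mul, one_mul, mul_sub, mul_one, idemA]; abel
  have hP2 : ‖(1 : Matrix (Fin n) (Fin n) ℝ) - Bp * B‖ ≤ 1 := by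
    apply proj_le
    · rw [Matrix.transpose_sub, Matrix.transpose_one, hB4]
    · rw [sub_mul, one_mul, mul_sub, mul_one, idemB]; abel
  set M := max (‖Ap‖ ^ 2) (‖Bp‖ ^ 2) with hM
  set E := B - A with hE
  have hEnn : (0:ℝ) ≤ ‖E‖ := norm_nonneg E
  have hApn : (0:ℝ) ≤ ‖Ap‖ := norm_nonneg Ap
  have hBpn : (0:ℝ) ≤ ‖Bp‖ := norm_nonneg Bp
  have hMa : ‖Ap‖ ^ 2 ≤ M := le_max_left _ _
  have hMb : ‖Bp‖ ^ 2 ≤ M := le_max_right _ _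
  have hMab : ‖Bp‖ * ‖Ap‖ ≤ M := by
    rcases le_total ‖Ap‖ ‖Bp‖ with h | h
    · calc ‖Bp‖ * ‖Ap‖ ≤ ‖Bp‖ * ‖Bp‖ := mul_le_mul_of_nonneg_left h hBpn
        _ = ‖Bp‖ ^ 2 := (sq ‖Bp‖).symm
        _ ≤ M := hMb
    · calc ‖Bp‖ * ‖Ap‖ ≤ ‖Ap‖ * ‖Ap‖ := mul_le_mul_of_nonneg_right h hApn
        _ = ‖Ap‖ ^ 2 := (sq ‖Ap‖).symm
        _ ≤ M := hMa
  -- bound each term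
  have t1 : ‖Bp * E * Ap‖ ≤ M * ‖E‖ := by
    calc ‖Bp * E * Ap‖ ≤ ‖Bp * E‖ * ‖Ap‖ := Matrix.l2_opNorm_mul _ _
      _ ≤ (‖Bp‖ * ‖E‖) * ‖Ap‖ :=
          mul_le_mul_of_nonneg_right (Matrix.l2_opNorm_mul _ _) hApn
      _ = (‖Bp‖ * ‖Ap‖) * ‖E‖ := by ring
      _ ≤ M * ‖E‖ := mul_le_mul_of_nonneg_right hMab hEnn
  have t2 : ‖Bp * Bpᵀ * Eᵀ * (1 - A * Ap)‖ ≤ M * ‖E‖ := by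
    calc ‖Bp * Bpᵀ * Eᵀ * (1 - A * Ap)‖
        ≤ ‖Bp * Bpᵀ * Eᵀ‖ * ‖(1 : Matrix (Fin m) (Fin m) ℝ) - A * Ap‖ :=
          Matrix.l2_opNorm_mul _ _
      _ ≤ ‖Bp * Bpᵀ * Eᵀ‖ * 1 :=
          mul_le_mul_of_nonneg_left hP1 (norm_nonneg _)
      _ = ‖Bp * Bpᵀ * Eᵀ‖ := mul_one _
      _ ≤ ‖Bp * Bpᵀ‖ * ‖Eᵀ‖ := Matrix.l2_opNorm_mul _ _
      _ ≤ (‖Bp‖ * ‖Bpᵀ‖) * ‖Eᵀ‖ :=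
          mul_le_mul_of_nonneg_right (Matrix.l2_opNorm_mul _ _) (norm_nonneg _)
      _ = ‖Bp‖ ^ 2 * ‖E‖ := by rw [hct Bp, hct E]; ring
      _ ≤ M * ‖E‖ := mul_le_mul_of_nonneg_right hMb hEnn
  have t3 : ‖(1 - Bp * B) * Eᵀ * (Apᵀ * Ap)‖ ≤ M * ‖E‖ := by
    have a3 : ‖Apᵀ * Ap‖ = ‖Ap‖ * ‖Ap‖ := by
      rw [← Matrix.conjTranspose_eq_transpose_of_trivial, Matrix.l2_opNorm_conjTranspose_mul_self]
    calc ‖(1 - Bp * B) * Eᵀ * (Apᵀ * Ap)‖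
        ≤ ‖(1 - Bp * B) * Eᵀ‖ * ‖Apᵀ * Ap‖ := Matrix.l2_opNorm_mul _ _
      _ ≤ (‖(1 : Matrix (Fin n) (Fin n) ℝ) - Bp * B‖ * ‖Eᵀ‖) * ‖Apᵀ * Ap‖ :=
          mul_le_mul_of_nonneg_right (Matrix.l2_opNorm_mul _ _) (norm_nonneg _)
      _ ≤ (1 * ‖Eᵀ‖) * ‖Apᵀ * Ap‖ :=
          mul_le_mul_of_nonneg_right (mul_le_mul_of_nonneg_right hP2 (norm_nonneg _))
            (norm_nonneg _)
      _ = ‖Ap‖ ^ 2 * ‖E‖ := by rw [a3, hct E]; ring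
      _ ≤ M * ‖E‖ := mul_le_mul_of_nonneg_right hMa hEnn
  calc ‖Bp - Ap‖ = ‖-(Bp * E * Ap) + Bp * Bpᵀ * Eᵀ * (1 - A * Ap)
      + (1 - Bp * B) * Eᵀ * (Apᵀ * Ap)‖ := by rw [key]
    _ ≤ ‖-(Bp * E * Ap) + Bp * Bpᵀ * Eᵀ * (1 - A * Ap)‖
        + ‖(1 - Bp * B) * Eᵀ * (Apᵀ * Ap)‖ := norm_add_le _ _
    _ ≤ ‖-(Bp * E * Ap)‖ + ‖Bp * Bpᵀ * Eᵀ * (1 - A * Ap)‖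
        + ‖(1 - Bp * B) * Eᵀ * (Apᵀ * Ap)‖ := by
        have := norm_add_le (-(Bp * E * Ap)) (Bp * Bpᵀ * Eᵀ * (1 - A * Ap)); linarith
    _ ≤ M * ‖E‖ + M * ‖E‖ + M * ‖E‖ := by rw [norm_neg]; linarith
    _ = 3 * M * ‖E‖ := by ring
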